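/- For every prime power q ≥ 2, the number m = 2q^4 − q^3 + q − 1 has S_q(3)-adic expansion (q−1)·(q^3+q^2+q+1) + 1·(q^3+q^2+q) + (q−1)·(q^3+q^2) + (−2)·q^3, with leading coefficient −2 < 0; consequently there is no q^3-divisible multiset of points over F_q of cardinality 2q^4 − q^3 + q − 1. -/

import Mathlib

open scoped Classical

/-- A multiset of points (1-dimensional subspaces) `P` in an ambient `F`-vector space `V`
is `q^r`-divisible if all its members are 1-dimensional and for every hyperplane `H`
the cardinality of the restriction `P ∩ H` is congruent to the cardinality of `P`
modulo `q^r`, where `q = Fintype.card F`. -/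
def IsDivisible (F : Type) [Field F] [Fintype F] {V : Type} [AddCommGroup V] [Module F V]
    (r : ℕ) (P : Multiset (Submodule F V)) : Prop :=
  (∀ X ∈ P, Module.finrank F ↥X = 1) ∧
  ∀ H : Submodule F V, Module.finrank F ↥H + 1 = Module.finrank F V →
    Multiset.card (P.filter (fun X => X ≤ H)) ≡ Multiset.card P [MOD (Fintype.card F) ^ r]

open Module Submodule Finset

noncomputable instance instFintypeSubmodule (F V : Type) [Field F] [AddCommGroup V]
    [Module F V] [Fintype V] : Fintype (Submodule F V) :=
  @Fintype.ofFinite _ (Finite.of_injective (fun p : Submodule F V => (p : Set V))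
    (fun _ _ h => by ext x; exact Set.ext_iff.mp h x))

/-- number of points of a `d`-dimensional space over a field with `Q` elements -/
def geoms (Q : ℕ) : ℕ → ℕ
  | 0 => 0
  | d + 1 => Q * geoms Q d + 1

lemma geoms_mul (Q : ℕ) (hQ : 1 ≤ Q) (d : ℕ) : (Q - 1) * geoms Q d + 1 = Q ^ d := by
  obtain ⟨k, rfl⟩ : ∃ k, Q = k + 1 := ⟨Q - 1, by omega⟩
  induction d with
  | zero => simp [geoms]
  | succ d ih =>
    show (k + 1 - 1) * ((k+1) * geoms (k+1) d + 1) + 1 = (k+1) ^ (d+1)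
    rw [pow_succ, ← ih]
    simp only [Nat.add_sub_cancel]
    ring


lemma swap_sum {α β : Type} (P : Multiset α) (s : Finset β) (R : α → β → Prop) :
    ∑ b ∈ s, Multiset.card (P.filter (fun a => R a b))
      = (P.map (fun a => (s.filter (fun b => R a b)).card)).sum := by
  classical
  induction P using Multiset.induction_on with
  | empty => simp
  | cons a P ih =>
    simp only [Multiset.filter_cons, Multiset.card_add, Multiset.map_cons, Multiset.sum_cons,
      Finset.sum_add_distrib, ih]
    congr 1
    rw [Finset.card_filter]
    congr 1
    funext b
    split <;> simp

section Count
variable (F : Type) [Field F] [Fintype F]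

local notation "q" => Fintype.card F

variable {V : Type} [AddCommGroup V] [Module F V] [FiniteDimensional F V] [Fintype V]

noncomputable instance : Fintype (V →ₗ[F] F) :=
  @Fintype.ofFinite _ (Finite.of_injective (fun f : V →ₗ[F] F => (f : V → F))
    (fun _ _ h => LinearMap.ext fun x => congrFun h x))

/-- The finset of hyperplanes. -/
noncomputable def hyps : Finset (Submodule F V) :=
  Finset.univ.filter (fun H => finrank F ↥H + 1 = finrank F V)

lemma mem_hyps {H : Submodule F V} : H ∈ hyps F ↔ finrank F ↥H + 1 = finrank F V := by
  simp [hyps]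

lemma exists_ker_eq (H : Submodule F V) (hH : finrank F ↥H + 1 = finrank F V) :
    ∃ f : V →ₗ[F] F, LinearMap.ker f = H := by
  have hq1 : finrank F (V ⧸ H) = 1 := by
    have := H.finrank_quotient_add_finrank; omega
  let e : (V ⧸ H) ≃ₗ[F] F := LinearEquiv.ofFinrankEq _ _ (by rw [hq1, finrank_self])
  refine ⟨e.toLinearMap ∘ₗ H.mkQ, ?_⟩
  rw [LinearMap.ker_comp, LinearEquiv.ker, Submodule.comap_bot, Submodule.ker_mkQ]

lemma ker_hyper (f : V →ₗ[F] F) (hf : f ≠ 0) :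
    finrank F ↥(LinearMap.ker f) + 1 = finrank F V := by
  have h1 := LinearMap.finrank_range_add_finrank_ker f
  obtain ⟨x, hx⟩ : ∃ x, f x ≠ 0 := by
    by_contra h; push_neg at h; exact hf (LinearMap.ext fun x => h x)
  have h2 : LinearMap.range f = ⊤ := LinearMap.range_eq_top.mpr (fun y =>
    ⟨(y * (f x)⁻¹) • x, by rw [map_smul, smul_eq_mul]; field_simp⟩)
  rw [h2] at h1
  simp only [finrank_top, finrank_self] at h1
  omega

lemma hyper_ne_top (H : Submodule F V) (hH : finrank F ↥H + 1 = finrank F V) : H ≠ ⊤ := by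
  intro h; rw [h, finrank_top] at hH; omega

lemma funct_ext (H : Submodule F V) (hH : finrank F ↥H + 1 = finrank F V)
    {v : V} (hv : v ∉ H) (f g : V →ₗ[F] F) (hf : LinearMap.ker f = H)
    (hg : LinearMap.ker g = H) (hfg : f v = g v) : f = g := by
  have hlt : H < H ⊔ Submodule.span F {v} := by
    refine lt_of_le_of_ne le_sup_left (fun h => hv ?_)
    rw [h]
    exact Submodule.mem_sup_right (Submodule.subset_span rfl)
  have hsup : H ⊔ Submodule.span F {v} = ⊤ := by
    apply Submodule.eq_top_of_finrank_eq
    have h1 := Submodule.finrank_lt_finrank_of_lt hlt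
    have h2 := Submodule.finrank_le (H ⊔ Submodule.span F {v})
    omega
  ext x
  have hx : x ∈ H ⊔ Submodule.span F {v} := hsup ▸ Submodule.mem_top
  rcases Submodule.mem_sup.mp hx with ⟨y, hy, z, hz, rfl⟩
  rcases Submodule.mem_span_singleton.mp hz with ⟨c, rfl⟩
  have hfy : f y = 0 := by rw [← LinearMap.mem_ker, hf]; exact hy
  have hgy : g y = 0 := by rw [← LinearMap.mem_ker, hg]; exact hy
  simp [hfy, hgy, hfg]

lemma fiber_card (H : Submodule F V) (hH : finrank F ↥H + 1 = finrank F V) :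
    Fintype.card {f : V →ₗ[F] F // LinearMap.ker f = H} = q - 1 := by
  have hlt : H < ⊤ := Ne.lt_top (hyper_ne_top F H hH)
  obtain ⟨v, -, hv⟩ := SetLike.exists_of_lt hlt
  obtain ⟨f₀, hf₀⟩ := exists_ker_eq F H hH
  have hf₀v : f₀ v ≠ 0 := by rw [← hf₀] at hv; simpa using hv
  have e : {f : V →ₗ[F] F // LinearMap.ker f = H} ≃ {c : F // c ≠ 0} :=
    { toFun := fun f => ⟨f.1 v, by rw [← f.2] at hv; simpa using hv⟩
      invFun := fun c => ⟨(c.1 * (f₀ v)⁻¹) • f₀, by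
        rw [LinearMap.ker_smul _ _ (mul_ne_zero c.2 (inv_ne_zero hf₀v)), hf₀]⟩
      left_inv := fun f => by
        have hfv : f.1 v ≠ 0 := by
          have hv' := hv; rw [← f.2] at hv'; simpa using hv'
        refine Subtype.ext (funct_ext F H hH hv _ _ ?_ f.2 ?_)
        · rw [LinearMap.ker_smul _ _ (mul_ne_zero hfv (inv_ne_zero hf₀v)), hf₀]
        · simp only [LinearMap.smul_apply, smul_eq_mul]; field_simp
      right_inv := fun c => by
        refine Subtype.ext ?_
        simp [LinearMap.smul_apply, smul_eq_mul]
        field_simp }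
  rw [Fintype.card_congr e]
  rw [Fintype.card_subtype_compl (p := fun c : F => c = 0)]
  simp [Fintype.card_subtype_eq]

lemma card_dual : Fintype.card (V →ₗ[F] F) = q ^ finrank F V := by
  have e : (Fin (finrank F V) → F) ≃ (V →ₗ[F] F) := ((Module.finBasis F V).constr F).toEquiv
  rw [Fintype.card_congr e.symm]
  simp

lemma card_hyps_mul : (hyps F (V := V)).card * (q - 1) = q ^ finrank F V - 1 := by
  classical
  set s : Finset (V →ₗ[F] F) := Finset.univ.filter (fun f => f ≠ 0) with hs
  have key : s.card = ∑ H ∈ hyps F, (s.filter (fun f => LinearMap.ker f = H)).card := by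
    apply Finset.card_eq_sum_card_fiberwise
    intro f hf
    simp only [hs, Finset.mem_filter, Finset.mem_univ, true_and] at hf
    exact (mem_hyps F).mpr (ker_hyper F f (by simpa using hf))
  have fib : ∀ H ∈ hyps F (V := V),
      (s.filter (fun f => LinearMap.ker f = H)).card = q - 1 := by
    intro H hH
    rw [hs, Finset.filter_filter]
    have hiff : ∀ f : V →ₗ[F] F, (f ≠ 0 ∧ LinearMap.ker f = H) ↔ LinearMap.ker f = H := by
      intro f
      constructor
      · exact fun h => h.2
      · intro h
        refine ⟨fun h0 => ?_, h⟩
        subst h0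
        exact hyper_ne_top F H ((mem_hyps F).mp hH) (by rw [← h, LinearMap.ker_zero])
    simp only [hiff]
    rw [← Fintype.card_subtype]
    exact fiber_card F H ((mem_hyps F).mp hH)
  have lhs : s.card = q ^ finrank F V - 1 := by
    have h1 : s.card = Fintype.card {f : V →ₗ[F] F // ¬ f = 0} := (Fintype.card_subtype _).symm
    rw [h1, Fintype.card_subtype_compl (p := fun f : V →ₗ[F] F => f = 0), card_dual F]
    simp [Fintype.card_subtype_eq]
  have hconst : ∑ H ∈ hyps F (V := V), (q - 1) = (hyps F (V := V)).card * (q - 1) := by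
    rw [Finset.sum_const, smul_eq_mul]
  rw [← hconst, ← Finset.sum_congr rfl fib, ← key, lhs]

lemma card_hyps : (hyps F (V := V)).card = geoms q (finrank F V) := by
  have h := card_hyps_mul F (V := V)
  have hq : 1 < q := Fintype.one_lt_card
  have h3 := geoms_mul q (le_of_lt hq) (finrank F V)
  apply Nat.eq_of_mul_eq_mul_left (show 0 < q - 1 by omega)
  rw [mul_comm] at h
  omega

lemma le_comap_mkQ (K : Submodule F V) (H' : Submodule F (V ⧸ K)) :
    K ≤ Submodule.comap K.mkQ H' := by
  intro x hx
  simp only [Submodule.mem_comap]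
  rw [show K.mkQ x = 0 from (Submodule.Quotient.mk_eq_zero K).mpr hx]
  exact H'.zero_mem

lemma finrank_comap_mkQ (K : Submodule F V) (H' : Submodule F (V ⧸ K)) :
    finrank F ↥(Submodule.comap K.mkQ H') = finrank F ↥H' + finrank F ↥K := by
  set H := Submodule.comap K.mkQ H' with hH
  have hK : K ≤ H := le_comap_mkQ F K H'
  have h1 := LinearMap.finrank_range_add_finrank_ker (K.mkQ.comp H.subtype)
  have hrange : LinearMap.range (K.mkQ.comp H.subtype) = H' := by
    rw [LinearMap.range_comp, Submodule.range_subtype]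
    show Submodule.map K.mkQ (Submodule.comap K.mkQ H') = H'
    rw [Submodule.map_comap_eq, Submodule.range_mkQ, top_inf_eq]
  have hker : LinearMap.ker (K.mkQ.comp H.subtype) = Submodule.comap H.subtype K := by
    rw [LinearMap.ker_comp, Submodule.ker_mkQ]
  have heq : finrank F ↥(Submodule.comap H.subtype K) = finrank F ↥K :=
    (Submodule.comapSubtypeEquivOfLe hK).finrank_eq
  rw [hrange, hker, heq] at h1
  omega

lemma card_hyps_above (K : Submodule F V) :
    (Finset.univ.filter
        (fun H : Submodule F V => K ≤ H ∧ finrank F ↥H + 1 = finrank F V)).card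
      = geoms q (finrank F (V ⧸ K)) := by
  haveI : Fintype (V ⧸ K) := Fintype.ofFinite _
  have e : {H' : Submodule F (V ⧸ K) // finrank F ↥H' + 1 = finrank F (V ⧸ K)}
      ≃ {H : Submodule F V // K ≤ H ∧ finrank F ↥H + 1 = finrank F V} :=
    { toFun := fun H' => ⟨Submodule.comap K.mkQ H'.1,
        ⟨le_comap_mkQ F K H'.1,
         by
          have h1 := finrank_comap_mkQ F K H'.1
          have h2 := H'.2
          have h3 := K.finrank_quotient_add_finrank
          omega⟩⟩
      invFun := fun H => ⟨Submodule.map K.mkQ H.1, by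
        have hc : Submodule.comap K.mkQ (Submodule.map K.mkQ H.1) = H.1 := by
          rw [Submodule.comap_map_mkQ, sup_eq_right.mpr H.2.1]
        have h1 := finrank_comap_mkQ F K (Submodule.map K.mkQ H.1)
        rw [hc] at h1
        have h2 := H.2.2
        have h3 := K.finrank_quotient_add_finrank
        omega⟩
      left_inv := fun H' => Subtype.ext (by
        show Submodule.map K.mkQ (Submodule.comap K.mkQ H'.1) = H'.1
        rw [Submodule.map_comap_eq, Submodule.range_mkQ, top_inf_eq])
      right_inv := fun H => Subtype.ext (by
        show Submodule.comap K.mkQ (Submodule.map K.mkQ H.1) = H.1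
        rw [Submodule.comap_map_mkQ, sup_eq_right.mpr H.2.1]) }
  rw [← Fintype.card_subtype, ← Fintype.card_congr e, Fintype.card_subtype]
  exact card_hyps F (V := V ⧸ K)

lemma exists_low_hyper (r : ℕ) (P : Multiset (Submodule F V)) (hP : IsDivisible F r P)
    (hn : 1 ≤ Multiset.card P) :
    ∃ H : Submodule F V, finrank F ↥H + 1 = finrank F V ∧
      q * Multiset.card (P.filter (fun X => X ≤ H)) < Multiset.card P := by
  classical
  set n := Multiset.card P with hn'
  obtain ⟨X₀, hX₀⟩ := Multiset.exists_mem_of_ne_zero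
    (show P ≠ 0 by intro h; rw [hn', h] at hn; simp at hn)
  have hm : 1 ≤ finrank F V := by
    have h1 := hP.1 X₀ hX₀
    have h2 := Submodule.finrank_le X₀
    omega
  by_contra hcon
  push_neg at hcon
  set m := finrank F V
  set g := geoms q (m - 1) with hg
  have point_count : ∀ X ∈ P, ((hyps F (V := V)).filter (fun H => X ≤ H)).card = g := by
    intro X hX
    have h1 : (hyps F (V := V)).filter (fun H => X ≤ H)
        = Finset.univ.filter
            (fun H : Submodule F V => X ≤ H ∧ finrank F ↥H + 1 = finrank F V) := by
      rw [hyps, Finset.filter_filter]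
      apply Finset.filter_congr
      intro H _
      simp [and_comm]
    rw [h1, card_hyps_above F X]
    have h2 := X.finrank_quotient_add_finrank
    have h3 := hP.1 X hX
    rw [hg]
    congr 1
    omega
  have key1 : ∑ H ∈ hyps F (V := V), Multiset.card (P.filter (fun X => X ≤ H)) = n * g := by
    rw [swap_sum P (hyps F) (fun X H => X ≤ H)]
    rw [Multiset.map_congr rfl point_count]
    simp [Multiset.map_const', hn', mul_comm]
  have key2 : (hyps F (V := V)).card * n ≤ q * (n * g) := by
    calc (hyps F (V := V)).card * n = ∑ _H ∈ hyps F (V := V), n := by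
          rw [Finset.sum_const, smul_eq_mul]
      _ ≤ ∑ H ∈ hyps F (V := V), q * Multiset.card (P.filter (fun X => X ≤ H)) :=
          Finset.sum_le_sum (fun H hH => hcon H ((mem_hyps F).mp hH))
      _ = q * (n * g) := by rw [← Finset.mul_sum, key1]
  have hcard : (hyps F (V := V)).card = q * g + 1 := by
    rw [card_hyps F, hg]
    have hm' : finrank F V = (m - 1) + 1 := by omega
    rw [hm']
    simp [geoms]
  have expand : (q * g + 1) * n = q * (n * g) + n := by ring
  rw [hcard, expand] at key2
  omega

lemma card_filter_multiset {α : Type} (p : α → Prop) [DecidablePred p] (P : Multiset α) :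
    (P.map (fun a => if p a then 1 else 0)).sum = Multiset.card (P.filter p) := by
  induction P using Multiset.induction_on with
  | empty => simp
  | cons a P ih =>
    simp only [Multiset.map_cons, Multiset.sum_cons, Multiset.filter_cons, Multiset.card_add, ih]
    split <;> simp

lemma restriction (r : ℕ) (hr : 1 ≤ r) (P : Multiset (Submodule F V)) (hP : IsDivisible F r P)
    (H : Submodule F V) (hH : finrank F ↥H + 1 = finrank F V) :
    IsDivisible F (r - 1) ((P.filter (fun X => X ≤ H)).map
      (fun X => Submodule.comap H.subtype X)) := by
  classical
  set n := Multiset.card P with hn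
  constructor
  · rintro Y hY
    rw [Multiset.mem_map] at hY
    obtain ⟨X, hX, rfl⟩ := hY
    rw [Multiset.mem_filter] at hX
    have h1 : finrank F ↥X = 1 := hP.1 X hX.1
    rw [← (Submodule.comapSubtypeEquivOfLe hX.2).finrank_eq] at h1
    exact h1
  intro K' hK'
  set K := Submodule.map H.subtype K' with hKdef
  have hKH : K ≤ H := Submodule.map_subtype_le H K'
  have hfK : finrank F ↥K = finrank F ↥K' :=
    ((Submodule.equivMapOfInjective H.subtype (Submodule.injective_subtype H) K').finrank_eq).symm
  have hcomapK : Submodule.comap H.subtype K = K' :=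
    Submodule.comap_map_eq_of_injective (Submodule.injective_subtype H) K'
  -- translate the filter on the mapped multiset
  have hfilter : ∀ X ∈ P, X ≤ H → (Submodule.comap H.subtype X ≤ K' ↔ X ≤ K) := by
    intro X _ hXH
    constructor
    · intro h
      have h2 : Submodule.map H.subtype (Submodule.comap H.subtype X) = X := by
        rw [Submodule.map_comap_subtype, inf_eq_right.mpr hXH]
      rw [← h2]
      exact Submodule.map_mono h
    · intro h
      rw [← hcomapK]
      exact Submodule.comap_mono h
  have hcards : Multiset.card ((((P.filter (fun X => X ≤ H)).map
        (fun X => Submodule.comap H.subtype X)).filter (fun Y => Y ≤ K')))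
      = Multiset.card (P.filter (fun X => X ≤ K)) := by
    rw [Multiset.filter_map, Multiset.card_map]
    rw [Multiset.filter_filter]
    apply congrArg
    apply Multiset.filter_congr
    intro X hX
    simp only [Function.comp]
    constructor
    · rintro ⟨h1, h2⟩
      exact (hfilter X hX h2).mp h1
    · intro h
      exact ⟨(hfilter X hX (le_trans h hKH)).mpr h, le_trans h hKH⟩
  rw [Multiset.card_map]
  -- now the congruence
  set cK := Multiset.card (P.filter (fun X => X ≤ K)) with hcK
  set aH := Multiset.card (P.filter (fun X => X ≤ H)) with haH
  have hfHK : finrank F ↥K + 2 = finrank F V := by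
    have := hK'
    omega
  -- the pencil of hyperplanes through K
  set S : Finset (Submodule F V) := Finset.univ.filter
    (fun H' : Submodule F V => K ≤ H' ∧ finrank F ↥H' + 1 = finrank F V) with hS
  have hScard : S.card = Fintype.card F + 1 := by
    rw [hS, card_hyps_above F K]
    have h2 := K.finrank_quotient_add_finrank
    have h3 : finrank F (V ⧸ K) = 2 := by omega
    rw [h3]
    simp [geoms]
  have point_count : ∀ X ∈ P, (S.filter (fun H' => X ≤ H')).card
      = 1 + (if X ≤ K then Fintype.card F else 0) := by
    intro X hX
    have hfX := hP.1 X hX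
    by_cases hXK : X ≤ K
    · rw [if_pos hXK]
      have : S.filter (fun H' => X ≤ H') = S := by
        apply Finset.filter_true_of_mem
        intro H' hH'
        rw [hS, Finset.mem_filter] at hH'
        exact le_trans hXK hH'.2.1
      rw [this, hScard]
      omega
    · rw [if_neg hXK]
      set J := K ⊔ X with hJ
      have hKJ : K < J := by
        refine lt_of_le_of_ne le_sup_left (fun h => hXK ?_)
        rw [h]
        exact le_sup_right
      have hJr : finrank F ↥J = finrank F ↥K + 1 := by
        have h1 := Submodule.finrank_lt_finrank_of_lt hKJ
        have h2 := Submodule.finrank_sup_add_finrank_inf_eq K X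
        rw [← hJ] at h2
        omega
      have hJS : J ∈ S := by
        rw [hS, Finset.mem_filter]
        exact ⟨Finset.mem_univ _, le_sup_left, by omega⟩
      have : S.filter (fun H' => X ≤ H') = {J} := by
        apply Finset.ext
        intro H'
        simp only [Finset.mem_filter, Finset.mem_singleton]
        constructor
        · rintro ⟨hH'S, hXH'⟩
          rw [hS, Finset.mem_filter] at hH'S
          have hJH' : J ≤ H' := sup_le hH'S.2.1 hXH'
          have := hH'S.2.2
          exact (Submodule.eq_of_le_of_finrank_eq hJH' (by omega)).symm
        · rintro rfl
          exact ⟨hJS, le_sup_right⟩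
      rw [this]
      simp
  -- the pencil identity
  have sum_eq : ∑ H' ∈ S, Multiset.card (P.filter (fun X => X ≤ H'))
      = n + Fintype.card F * cK := by
    rw [swap_sum P S (fun X H' => X ≤ H')]
    rw [Multiset.map_congr rfl point_count]
    rw [Multiset.sum_map_add]
    congr 1
    · simp [hn]
    · have : (P.map (fun X => if X ≤ K then Fintype.card F else 0))
          = P.map (fun X => Fintype.card F * (if X ≤ K then 1 else 0)) := by
        apply Multiset.map_congr rfl
        intro X _
        split <;> simp
      rw [this, Multiset.sum_map_mul_left, card_filter_multiset, hcK]
  -- divisibility bookkeeping in ℤ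
  set q' : ℤ := (Fintype.card F : ℤ) with hq'
  have hdvd_each : ∀ H' ∈ S, (q' ^ r) ∣ ((n : ℤ) - Multiset.card (P.filter (fun X => X ≤ H'))) := by
    intro H' hH'
    rw [hS, Finset.mem_filter] at hH'
    have := (Nat.modEq_iff_dvd).mp (hP.2 H' hH'.2.2)
    push_cast at this ⊢
    convert this using 2
  have hdvd_sum : (q' ^ r) ∣ ∑ H' ∈ S, ((n : ℤ) - Multiset.card (P.filter (fun X => X ≤ H'))) :=
    Finset.dvd_sum hdvd_each
  have hsum_val : ∑ H' ∈ S, ((n : ℤ) - Multiset.card (P.filter (fun X => X ≤ H')))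
      = q' * ((n : ℤ) - cK) := by
    rw [Finset.sum_sub_distrib, Finset.sum_const, hScard]
    have : ∑ H' ∈ S, (Multiset.card (P.filter (fun X => X ≤ H')) : ℤ)
        = ((∑ H' ∈ S, Multiset.card (P.filter (fun X => X ≤ H')) : ℕ) : ℤ) := by
      push_cast; rfl
    rw [this, sum_eq]
    push_cast
    ring
  rw [hsum_val] at hdvd_sum
  have hq0 : q' ≠ 0 := by
    rw [hq']
    exact_mod_cast (Fintype.card_pos (α := F)).ne'
  have hdvd1 : q' ^ (r - 1) ∣ ((n : ℤ) - cK) := by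
    have hrw : q' ^ r = q' * q' ^ (r - 1) := by
      rw [← pow_succ']
      congr 1
      omega
    rw [hrw] at hdvd_sum
    exact (mul_dvd_mul_iff_left hq0).mp hdvd_sum
  have hdvd2 : q' ^ (r - 1) ∣ ((n : ℤ) - aH) := by
    have h1 := (Nat.modEq_iff_dvd).mp (hP.2 H hH)
    have h2 : q' ^ (r - 1) ∣ q' ^ r := pow_dvd_pow q' (by omega)
    refine dvd_trans h2 ?_
    push_cast at h1 ⊢
    convert h1 using 2
  rw [hcards]
  rw [Nat.modEq_iff_dvd]
  push_cast
  have : (aH : ℤ) - cK = ((n : ℤ) - cK) - ((n : ℤ) - aH) := by ring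
  rw [show ((aH : ℤ) - (cK : ℤ)) = ((n : ℤ) - cK) - ((n : ℤ) - aH) from by ring]
  exact dvd_sub hdvd1 hdvd2

end Count

section Main
variable (F : Type) [Field F] [Fintype F]

local notation "q" => Fintype.card F

/-- There exists a `q^r`-divisible multiset of points of cardinality `n` in some
finite-dimensional `F`-vector space. -/
def ExDiv (r n : ℕ) : Prop :=
  ∃ (V : Type) (i1 : AddCommGroup V) (i2 : @Module F V inferInstance i1.toAddCommMonoid)
    (_i3 : @FiniteDimensional F V inferInstance i1 i2)
    (P : Multiset (@Submodule F V inferInstance i1.toAddCommMonoid i2)),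
    @IsDivisible F inferInstance inferInstance V i1 i2 r P ∧ Multiset.card P = n

lemma descent (r n : ℕ) (hr : 1 ≤ r) (hn : 1 ≤ n) (h : ExDiv F r n) :
    ∃ a : ℕ, a ≡ n [MOD q ^ r] ∧ q * a < n ∧ ExDiv F (r - 1) a := by
  obtain ⟨V, i1, i2, i3, P, hP, hcard⟩ := h
  letI : AddCommGroup V := i1
  letI : Module F V := i2
  letI : FiniteDimensional F V := i3
  haveI : Finite V := Module.finite_of_finite F
  haveI : Fintype V := Fintype.ofFinite V
  obtain ⟨H, hH, hlt⟩ := exists_low_hyper F r P hP (by rw [hcard]; exact hn)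
  refine ⟨Multiset.card (P.filter (fun X => X ≤ H)), ?_, ?_, ?_⟩
  · have h2 := hP.2 H hH
    rw [hcard] at h2
    exact h2
  · rw [← hcard]
    exact hlt
  · exact ⟨↥H, inferInstance, inferInstance, inferInstance,
      (P.filter (fun X => X ≤ H)).map (fun X => Submodule.comap H.subtype X),
      restriction F r hr P hP H hH, Multiset.card_map _ _⟩

lemma modeq_int {a n : ℕ} {M : ℕ} (h : a ≡ n [MOD M]) : (M : ℤ) ∣ (n : ℤ) - (a : ℤ) :=
  (Nat.modEq_iff_dvd).mp h

lemma no_ex_q_minus_one (r : ℕ) (hr : 1 ≤ r) : ¬ ExDiv F r (q - 1) := by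
  intro h
  have hq : 2 ≤ q := Fintype.one_lt_card
  obtain ⟨a, hmod, hlt, -⟩ := descent F r (q - 1) hr (by omega) h
  have ha : a = 0 := by
    by_contra h0
    have : q * 1 ≤ q * a := Nat.mul_le_mul_left q (by omega)
    omega
  subst ha
  have hdvd : ((q : ℤ) ^ r) ∣ ((q : ℤ) - 1 - 0) := by
    have h := modeq_int hmod
    push_cast [Nat.cast_sub (by omega : 1 ≤ q)] at h
    simpa using h
  have h1 : (q : ℤ) ≤ (q : ℤ) ^ r := by
    calc (q : ℤ) = (q : ℤ) ^ 1 := (pow_one _).symm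
    _ ≤ (q : ℤ) ^ r := pow_le_pow_right₀ (by exact_mod_cast (by omega : 1 ≤ q) : (1:ℤ) ≤ q) hr
  have h2 : (q : ℤ) ^ r ≤ (q : ℤ) - 1 - 0 := Int.le_of_dvd (by
    have : (2 : ℤ) ≤ (q : ℤ) := by exact_mod_cast hq
    omega) hdvd
  have : (2 : ℤ) ≤ (q : ℤ) := by exact_mod_cast hq
  omega

end Main

section Final
variable (F : Type) [Field F] [Fintype F]

local notation "q" => Fintype.card F

lemma no_ex_mid : ¬ ExDiv F 2 (q ^ 3 + q - 1) := by
  intro h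
  have hq : 2 ≤ q := Fintype.one_lt_card
  have hq3 : 8 ≤ q ^ 3 := by
    calc (8 : ℕ) = 2 ^ 3 := by norm_num
    _ ≤ q ^ 3 := Nat.pow_le_pow_left hq 3
  obtain ⟨b, hmod, hlt, hb⟩ := descent F 2 _ (by norm_num) (by omega) h
  have hQ2 : (2 : ℤ) ≤ (q : ℤ) := by exact_mod_cast hq
  have hQ3 : (8 : ℤ) ≤ (q : ℤ) ^ 3 := by nlinarith
  have hQ2b : (q : ℤ) ≤ (q : ℤ) ^ 2 := le_self_pow₀ (by linarith) (by norm_num)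
  have hsq : 2 * (q : ℤ) - 1 ≤ (q : ℤ) ^ 2 := by nlinarith [sq_nonneg ((q : ℤ) - 1)]
  have hcast : ((q ^ 3 + q - 1 : ℕ) : ℤ) = (q : ℤ) ^ 3 + (q : ℤ) - 1 := by
    push_cast [Nat.cast_sub (by omega : 1 ≤ q ^ 3 + q)]
    ring
  have hd : ((q : ℤ)) ^ 2 ∣ ((q : ℤ) ^ 3 + (q : ℤ) - 1) - (b : ℤ) := by
    have h1 := modeq_int hmod
    rw [hcast] at h1
    exact_mod_cast h1
  have hd2 : ((q : ℤ)) ^ 2 ∣ (b : ℤ) - ((q : ℤ) - 1) := by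
    have h3 : ((q : ℤ)) ^ 2 ∣ (q : ℤ) ^ 3 := ⟨(q : ℤ), by ring⟩
    have h4 := dvd_sub h3 hd
    rw [show (b : ℤ) - ((q : ℤ) - 1) = (q : ℤ) ^ 3 - ((q : ℤ) ^ 3 + (q : ℤ) - 1 - (b : ℤ)) by ring]
    exact h4
  obtain ⟨s, hs⟩ := hd2
  have hb0 : (0 : ℤ) ≤ (b : ℤ) := Int.natCast_nonneg b
  have hblt : (q : ℤ) * (b : ℤ) < (q : ℤ) ^ 3 + (q : ℤ) - 1 := by
    have h2 : ((q * b : ℕ) : ℤ) < ((q ^ 3 + q - 1 : ℕ) : ℤ) := by exact_mod_cast hlt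
    rw [hcast] at h2
    push_cast at h2
    exact h2
  have hbe : (b : ℤ) = (q : ℤ) ^ 2 * s + ((q : ℤ) - 1) := by linarith [hs]
  have hs0 : 0 ≤ s := by
    by_contra hcon
    push_neg at hcon
    have h5 : s ≤ -1 := by omega
    have h6 : (q : ℤ) ^ 2 * s ≤ (q : ℤ) ^ 2 * (-1) :=
      mul_le_mul_of_nonneg_left h5 (by positivity)
    linarith
  have hs1 : s ≤ 0 := by
    by_contra hcon
    push_neg at hcon
    have h5 : (1 : ℤ) ≤ s := by omega
    have h6 : (q : ℤ) ^ 2 * 1 ≤ (q : ℤ) ^ 2 * s :=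
      mul_le_mul_of_nonneg_left h5 (by positivity)
    have h7 : (q : ℤ) * ((q : ℤ) ^ 2 * 1 + ((q : ℤ) - 1)) ≤ (q : ℤ) * (b : ℤ) := by
      rw [hbe]
      apply mul_le_mul_of_nonneg_left _ (by positivity)
      linarith
    nlinarith [hsq]
  have hsz : s = 0 := le_antisymm hs1 hs0
  have hbq : b = q - 1 := by
    rw [hsz, mul_zero, zero_add] at hbe
    omega
  rw [hbq] at hb
  exact no_ex_q_minus_one F 1 le_rfl hb

lemma no_ex_top : ¬ ExDiv F 3 (2 * q ^ 4 - q ^ 3 + q - 1) := by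
  intro h
  have hq : 2 ≤ q := Fintype.one_lt_card
  have hq3 : 8 ≤ q ^ 3 := by
    calc (8 : ℕ) = 2 ^ 3 := by norm_num
    _ ≤ q ^ 3 := Nat.pow_le_pow_left hq 3
  have hq34 : q ^ 3 ≤ q ^ 4 := Nat.pow_le_pow_right (by omega) (by norm_num)
  have hq4 : 16 ≤ q ^ 4 := by
    calc (16 : ℕ) = 2 ^ 4 := by norm_num
    _ ≤ q ^ 4 := Nat.pow_le_pow_left hq 4
  have hQ2 : (2 : ℤ) ≤ (q : ℤ) := by exact_mod_cast hq
  have hQ3 : (8 : ℤ) ≤ (q : ℤ) ^ 3 := by nlinarith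
  have hQ3b : (q : ℤ) ≤ (q : ℤ) ^ 3 := le_self_pow₀ (by linarith) (by norm_num)
  have hsq : 2 * (q : ℤ) - 1 ≤ (q : ℤ) ^ 2 := by nlinarith [sq_nonneg ((q : ℤ) - 1)]
  have hcast : ((2 * q ^ 4 - q ^ 3 + q - 1 : ℕ) : ℤ)
      = 2 * (q : ℤ) ^ 4 - (q : ℤ) ^ 3 + (q : ℤ) - 1 := by
    push_cast [Nat.cast_sub (by omega : 1 ≤ 2 * q ^ 4 - q ^ 3 + q),
      Nat.cast_sub (by omega : q ^ 3 ≤ 2 * q ^ 4)]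
    ring
  obtain ⟨a, hmod, hlt, ha⟩ := descent F 3 _ (by norm_num) (by omega) h
  have hd : ((q : ℤ)) ^ 3 ∣ (2 * (q : ℤ) ^ 4 - (q : ℤ) ^ 3 + (q : ℤ) - 1) - (a : ℤ) := by
    have h1 := modeq_int hmod
    rw [hcast] at h1
    exact_mod_cast h1
  have hd2 : ((q : ℤ)) ^ 3 ∣ (a : ℤ) - ((q : ℤ) - 1) := by
    have h3 : ((q : ℤ)) ^ 3 ∣ (2 * (q : ℤ) ^ 4 - (q : ℤ) ^ 3 + (q : ℤ) - 1) - ((q : ℤ) - 1) :=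
      ⟨2 * (q : ℤ) - 1, by ring⟩
    have h4 := dvd_sub h3 hd
    rw [show (a : ℤ) - ((q : ℤ) - 1) = (2 * (q : ℤ) ^ 4 - (q : ℤ) ^ 3 + (q : ℤ) - 1 - ((q : ℤ) - 1))
      - (2 * (q : ℤ) ^ 4 - (q : ℤ) ^ 3 + (q : ℤ) - 1 - (a : ℤ)) by ring]
    exact h4
  obtain ⟨t, ht⟩ := hd2
  have ha0 : (0 : ℤ) ≤ (a : ℤ) := Int.natCast_nonneg a
  have halt : (q : ℤ) * (a : ℤ) < 2 * (q : ℤ) ^ 4 - (q : ℤ) ^ 3 + (q : ℤ) - 1 := by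
    have h2 : ((q * a : ℕ) : ℤ) < ((2 * q ^ 4 - q ^ 3 + q - 1 : ℕ) : ℤ) := by exact_mod_cast hlt
    rw [hcast] at h2
    push_cast at h2
    exact h2
  have hae : (a : ℤ) = (q : ℤ) ^ 3 * t + ((q : ℤ) - 1) := by linarith [ht]
  have ht0 : 0 ≤ t := by
    by_contra hcon
    push_neg at hcon
    have h5 : t ≤ -1 := by omega
    have h6 : (q : ℤ) ^ 3 * t ≤ (q : ℤ) ^ 3 * (-1) :=
      mul_le_mul_of_nonneg_left h5 (by positivity)
    linarith
  have ht1 : t ≤ 1 := by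
    by_contra hcon
    push_neg at hcon
    have h5 : (2 : ℤ) ≤ t := by omega
    have h6 : (q : ℤ) ^ 3 * 2 ≤ (q : ℤ) ^ 3 * t :=
      mul_le_mul_of_nonneg_left h5 (by positivity)
    have h7 : (q : ℤ) * ((q : ℤ) ^ 3 * 2 + ((q : ℤ) - 1)) ≤ (q : ℤ) * (a : ℤ) := by
      rw [hae]
      apply mul_le_mul_of_nonneg_left _ (by positivity)
      linarith
    nlinarith [hsq, hQ3]
  interval_cases t
  · have haq : a = q - 1 := by
      rw [mul_zero, zero_add] at hae
      omega
    rw [haq] at ha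
    exact no_ex_q_minus_one F 2 (by norm_num) ha
  · have h5 : ((q ^ 3 + q - 1 : ℕ) : ℤ) = (q : ℤ) ^ 3 + (q : ℤ) - 1 := by
      push_cast [Nat.cast_sub (by omega : 1 ≤ q ^ 3 + q)]
      ring
    have haq : a = q ^ 3 + q - 1 := by
      have h6 : (a : ℤ) = ((q ^ 3 + q - 1 : ℕ) : ℤ) := by rw [h5, hae]; ring
      exact_mod_cast h6
    rw [haq] at ha
    exact no_ex_mid F ha

end Final

/-- For every prime power `q`, `2q^4 - q^3 + q - 1` has `S_q(3)`-adic expansion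
`(q-1)(q^3+q^2+q+1) + 1·(q^3+q^2+q) + (q-1)(q^3+q^2) + (-2)·q^3` with leading coefficient
`-2 < 0`; consequently there is no `q^3`-divisible multiset of points over `F_q` of
cardinality `2q^4 - q^3 + q - 1`. -/
theorem no_q3_divisible_of_special_card (F : Type) [Field F] [Fintype F] :
    (2 * (Fintype.card F : ℤ) ^ 4 - (Fintype.card F : ℤ) ^ 3 + (Fintype.card F : ℤ) - 1 =
        ((Fintype.card F : ℤ) - 1) *
            ((Fintype.card F : ℤ) ^ 3 + (Fintype.card F : ℤ) ^ 2 + (Fintype.card F : ℤ) + 1) +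
          1 * ((Fintype.card F : ℤ) ^ 3 + (Fintype.card F : ℤ) ^ 2 + (Fintype.card F : ℤ)) +
          ((Fintype.card F : ℤ) - 1) * ((Fintype.card F : ℤ) ^ 3 + (Fintype.card F : ℤ) ^ 2) +
          (-2) * (Fintype.card F : ℤ) ^ 3) ∧
    ¬ ∃ (m : ℕ) (P : Multiset (Submodule F (Fin m → F))),
        IsDivisible F 3 P ∧
          (Multiset.card P : ℤ) =
            2 * (Fintype.card F : ℤ) ^ 4 - (Fintype.card F : ℤ) ^ 3 +
              (Fintype.card F : ℤ) - 1 := by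
  
  constructor
  · ring
  · rintro ⟨m, P, hdiv, hcardZ⟩
    have hq : 2 ≤ Fintype.card F := Fintype.one_lt_card
    have hq3 : 8 ≤ Fintype.card F ^ 3 := by
      calc (8 : ℕ) = 2 ^ 3 := by norm_num
      _ ≤ Fintype.card F ^ 3 := Nat.pow_le_pow_left hq 3
    have hq34 : Fintype.card F ^ 3 ≤ Fintype.card F ^ 4 :=
      Nat.pow_le_pow_right (by omega) (by norm_num)
    have hq4 : 16 ≤ Fintype.card F ^ 4 := by
      calc (16 : ℕ) = 2 ^ 4 := by norm_num
      _ ≤ Fintype.card F ^ 4 := Nat.pow_le_pow_left hq 4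
    have hcast : ((2 * Fintype.card F ^ 4 - Fintype.card F ^ 3 + Fintype.card F - 1 : ℕ) : ℤ)
        = 2 * (Fintype.card F : ℤ) ^ 4 - (Fintype.card F : ℤ) ^ 3 + (Fintype.card F : ℤ) - 1 := by
      push_cast [Nat.cast_sub
          (by omega : 1 ≤ 2 * Fintype.card F ^ 4 - Fintype.card F ^ 3 + Fintype.card F),
        Nat.cast_sub (by omega : Fintype.card F ^ 3 ≤ 2 * Fintype.card F ^ 4)]
      ring
    have hcardN : Multiset.card P
        = 2 * Fintype.card F ^ 4 - Fintype.card F ^ 3 + Fintype.card F - 1 := by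
      have h1 : (Multiset.card P : ℤ)
          = ((2 * Fintype.card F ^ 4 - Fintype.card F ^ 3 + Fintype.card F - 1 : ℕ) : ℤ) := by
        rw [hcast]; exact hcardZ
      exact_mod_cast h1
    exact no_ex_top F ⟨Fin m → F, inferInstance, inferInstance, inferInstance, P, hdiv, hcardN⟩
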